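/- Let N ≥ 1 be an integer and P ≥ 1 squarefree, and let W_P(N) = {n : 1 ≤ n ≤ P, gcd((N−n)(N+n), P) = 1}. For any assignment of real numbers f_p to each prime p ∣ P, one has ∑_{n ∈ W_P(N)} ∏_{p ∣ P/gcd(P,n)} (f_p − 1)/(p − 1) = ∏_{p ∣ gcd(N,P)} (f_p − 1) · ∏_{p ∣ P, p ∤ 6N} (f_p − 2(f_p − 1)/(p − 1)). -/

import Mathlib

open Finset

noncomputable def Gfun (N : ℕ) (f : ℕ → ℝ) (q n : ℕ) : ℝ :=
  if (q:ℤ) ∣ ((N:ℤ) - n) * ((N:ℤ) + n) then 0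
  else if q ∣ n then 1 else (f q - 1) / ((q:ℝ) - 1)

noncomputable def Rfun (N : ℕ) (f : ℕ → ℝ) (q : ℕ) : ℝ :=
  if q ∣ N then f q - 1
  else if q ∣ 6 * N then 1 else f q - 2 * (f q - 1) / ((q:ℝ) - 1)

lemma sum_zmod (N p : ℕ) (hp : p.Prime) (f : ℕ → ℝ) :
    haveI : Fact p.Prime := ⟨hp⟩
    ∑ z : ZMod p, (if z = (N : ZMod p) ∨ z = -(N : ZMod p) then 0
      else if z = 0 then 1 else (f p - 1) / ((p:ℝ) - 1)) = Rfun N f p := by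
  haveI : Fact p.Prime := ⟨hp⟩
  set c : ℝ := (f p - 1) / ((p:ℝ) - 1) with hc
  set a : ZMod p := (N : ZMod p) with ha
  set A : Finset (ZMod p) := {a, -a} with hA
  have hmem : ∀ z : ZMod p, (z = a ∨ z = -a) ↔ z ∈ A := by
    intro z; simp [hA]
  have hsplit : ∀ z : ZMod p,
      (if z = a ∨ z = -a then (0:ℝ) else if z = 0 then 1 else c)
      = (if z = 0 then 1 else c) - (if z ∈ A then (if z = 0 then 1 else c) else 0) := by
    intro z
    by_cases h : z = a ∨ z = -a
    · rw [if_pos h, if_pos ((hmem z).1 h)]; ring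
    · rw [if_neg h, if_neg (fun hz => h ((hmem z).2 hz))]; ring
  rw [Finset.sum_congr rfl (fun z _ => hsplit z), Finset.sum_sub_distrib]
  have hW : ∑ z : ZMod p, (if z = 0 then (1:ℝ) else c) = (p:ℝ) * c + (1 - c) := by
    have : ∀ z : ZMod p, (if z = 0 then (1:ℝ) else c) = c + (if z = 0 then 1 - c else 0) := by
      intro z; by_cases h : z = 0 <;> simp [h]
    rw [Finset.sum_congr rfl (fun z _ => this z), Finset.sum_add_distrib,
      Finset.sum_const, Finset.sum_ite_eq' Finset.univ (0 : ZMod p) (fun _ => (1:ℝ) - c)]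
    simp [ZMod.card, mul_comm]
  have hA' : ∑ z : ZMod p, (if z ∈ A then (if z = 0 then (1:ℝ) else c) else 0)
      = ∑ z ∈ A, (if z = 0 then (1:ℝ) else c) := by
    rw [Finset.sum_ite_mem, Finset.univ_inter]
  rw [hA', hW]
  have hp1 : ((p:ℝ) - 1) ≠ 0 := by
    have : (2:ℝ) ≤ (p:ℝ) := by exact_mod_cast hp.two_le
    linarith
  have hpc : ((p:ℝ) - 1) * c = f p - 1 := by
    rw [hc]; field_simp
  by_cases hN : p ∣ N
  · have ha0 : a = 0 := by
      rw [ha]; exact (ZMod.natCast_eq_zero_iff N p).2 hN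
    have : A = {0} := by rw [hA, ha0]; simp
    rw [this, Rfun, if_pos hN]
    simp only [Finset.sum_singleton, if_pos rfl, if_true]
    linarith [hpc]
  · have ha0 : a ≠ 0 := fun h => hN ((ZMod.natCast_eq_zero_iff N p).1 h)
    have hna0 : -a ≠ 0 := fun h => ha0 (by simpa using h)
    have hSA : ∑ z ∈ A, (if z = 0 then (1:ℝ) else c)
        = if a = -a then c else 2 * c := by
      by_cases h : a = -a
      · rw [if_pos h, hA, ← h]; simp [ha0]
      · rw [if_neg h, hA, Finset.sum_insert (by simpa using h), Finset.sum_singleton,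
          if_neg ha0, if_neg hna0]; ring
    rw [hSA]
    by_cases h2 : p = 2
    · subst h2
      have : a = -a := (ZMod.neg_eq_self_mod_two a).symm
      rw [if_pos this, Rfun, if_neg hN, if_pos (by omega : (2:ℕ) ∣ 6 * N)]
      push_cast; ring
    · have hne : a ≠ -a := by
        intro h
        have h2a : (2 : ZMod p) * a = 0 := by
          rw [two_mul]; nth_rewrite 2 [h]; ring
        have h20 : (2 : ZMod p) ≠ 0 := by
          have : ((2:ℕ) : ZMod p) ≠ 0 := by
            rw [Ne, ZMod.natCast_eq_zero_iff]
            exact fun hd => h2 ((Nat.prime_dvd_prime_iff_eq hp Nat.prime_two).1 hd)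
          exact_mod_cast this
        exact ha0 ((mul_eq_zero.1 h2a).resolve_left h20)
      rw [if_neg hne, Rfun, if_neg hN]
      have h2c : 2 * (f p - 1) / ((p:ℝ) - 1) = 2 * c := by rw [hc]; ring
      by_cases h6 : p ∣ 6 * N
      · have h6' : p ∣ 6 := ((Nat.Prime.dvd_mul hp).1 h6).resolve_right hN
        have hple : p ≤ 6 := Nat.le_of_dvd (by norm_num) h6'
        have h3 : p = 3 := by
          have := hp.two_le
          interval_cases p <;>
            first | rfl | (exact absurd rfl h2) | (exact absurd hp (by decide)) |
              (exact absurd h6' (by decide))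
        subst h3
        rw [if_pos h6]
        push_cast; ring
      · rw [if_neg h6, h2c]
        linarith [hpc]

lemma Gfun_eq_zmod (N p : ℕ) (hp : p.Prime) (f : ℕ → ℝ) (n : ℕ) :
    haveI : Fact p.Prime := ⟨hp⟩
    Gfun N f p n = (if (n : ZMod p) = (N : ZMod p) ∨ (n : ZMod p) = -(N : ZMod p) then 0
      else if (n : ZMod p) = 0 then 1 else (f p - 1) / ((p:ℝ) - 1)) := by
  haveI : Fact p.Prime := ⟨hp⟩
  have h1 : ((p:ℤ) ∣ ((N:ℤ) - n) * ((N:ℤ) + n)) ↔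
      ((n : ZMod p) = (N : ZMod p) ∨ (n : ZMod p) = -(N : ZMod p)) := by
    rw [← ZMod.intCast_zmod_eq_zero_iff_dvd]
    push_cast
    rw [mul_eq_zero, sub_eq_zero, ← neg_eq_iff_eq_neg]
    constructor
    · rintro (h | h)
      · exact Or.inl h.symm
      · exact Or.inr (by linear_combination -h)
    · rintro (h | h)
      · exact Or.inl h.symm
      · exact Or.inr (by linear_combination -h)
  have h2 : (p ∣ n) ↔ ((n : ZMod p) = 0) := (ZMod.natCast_eq_zero_iff n p).symm
  rw [Gfun]
  by_cases hd : (p:ℤ) ∣ ((N:ℤ) - n) * ((N:ℤ) + n)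
  · rw [if_pos hd, if_pos (h1.1 hd)]
  · rw [if_neg hd, if_neg (fun h => hd (h1.2 h))]
    by_cases hn : p ∣ n
    · rw [if_pos hn, if_pos (h2.1 hn)]
    · rw [if_neg hn, if_neg (fun h => hn (h2.2 h))]

lemma sum_range_p (N p Q r : ℕ) (hp : p.Prime) (f : ℕ → ℝ) (hpQ : ¬ p ∣ Q) :
    haveI : Fact p.Prime := ⟨hp⟩
    ∑ a ∈ range p, Gfun N f p (a * Q + r)
      = ∑ z : ZMod p, (if z = (N : ZMod p) ∨ z = -(N : ZMod p) then 0
          else if z = 0 then 1 else (f p - 1) / ((p:ℝ) - 1)) := by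
  haveI : Fact p.Prime := ⟨hp⟩
  haveI : NeZero p := ⟨hp.ne_zero⟩
  set W : ZMod p → ℝ := fun z => (if z = (N : ZMod p) ∨ z = -(N : ZMod p) then 0
      else if z = 0 then 1 else (f p - 1) / ((p:ℝ) - 1)) with hWdef
  have hG : ∀ a : ℕ, Gfun N f p (a * Q + r) = W ((a : ZMod p) * Q + r) := by
    intro a
    rw [Gfun_eq_zmod N p hp f (a * Q + r)]
    push_cast
    rfl
  rw [Finset.sum_congr rfl (fun a _ => hG a)]
  have hQ0 : ((Q : ZMod p)) ≠ 0 := by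
    rw [Ne, ZMod.natCast_eq_zero_iff]; exact hpQ
  refine Finset.sum_nbij' (fun a => ((a : ZMod p) * Q + r : ZMod p))
    (fun z => (((z - r) * (Q : ZMod p)⁻¹).val)) ?_ ?_ ?_ ?_ (fun a _ => rfl)
  · intro a _; exact Finset.mem_univ _
  · intro z _
    exact Finset.mem_range.2 (ZMod.val_lt _)
  · intro a ha
    have hlt : a < p := Finset.mem_range.1 ha
    have h1 : ((a : ZMod p) * Q + r - r) * (Q : ZMod p)⁻¹ = (a : ZMod p) := by
      field_simp
      ring
    rw [h1, ZMod.val_cast_of_lt hlt]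
  · intro z _
    rw [ZMod.natCast_val, ZMod.cast_id]
    field_simp
    ring

lemma sum_range_mul {M : Type*} [AddCommMonoid M] (p Q : ℕ) (hQ : 0 < Q) (g : ℕ → M) :
    ∑ n ∈ range (p * Q), g n = ∑ a ∈ range p, ∑ b ∈ range Q, g (a * Q + b) := by
  rw [← Finset.sum_product']
  refine (Finset.sum_nbij' (fun (ab : ℕ × ℕ) => ab.1 * Q + ab.2)
    (fun n => ((n / Q, n % Q) : ℕ × ℕ)) ?_ ?_ ?_ ?_ (fun ab _ => rfl)).symm
  · rintro ⟨a, b⟩ hab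
    rw [Finset.mem_product, Finset.mem_range, Finset.mem_range] at hab
    refine Finset.mem_range.2 ?_
    calc a * Q + b < a * Q + Q := by omega
    _ = (a + 1) * Q := by ring
    _ ≤ p * Q := Nat.mul_le_mul_right Q hab.1
  · intro n hn
    rw [Finset.mem_range] at hn
    refine Finset.mem_product.2 ⟨Finset.mem_range.2 ?_, Finset.mem_range.2 (Nat.mod_lt _ hQ)⟩
    exact Nat.div_lt_of_lt_mul (by rwa [mul_comm] at hn)
  · rintro ⟨a, b⟩ hab
    rw [Finset.mem_product, Finset.mem_range, Finset.mem_range] at hab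
    dsimp only
    have h1 : (a * Q + b) / Q = a := by
      rw [mul_comm, Nat.mul_add_div hQ, Nat.div_eq_of_lt hab.2, add_zero]
    have h2 : (a * Q + b) % Q = b := by
      rw [mul_comm, Nat.mul_add_mod]; exact Nat.mod_eq_of_lt hab.2
    rw [h1, h2]
  · intro n _
    dsimp only
    rw [mul_comm, Nat.div_add_mod]

lemma Gfun_mod (N : ℕ) (f : ℕ → ℝ) (q a Q r : ℕ) (hq : q ∣ Q) :
    Gfun N f q (a * Q + r) = Gfun N f q r := by
  have hdvd : (q:ℤ) ∣ ((a * Q : ℕ) : ℤ) := by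
    exact_mod_cast Int.natCast_dvd_natCast.2 (Dvd.dvd.mul_left hq a)
  have h1 : ((q:ℤ) ∣ ((N:ℤ) - (a * Q + r : ℕ)) * ((N:ℤ) + (a * Q + r : ℕ))) ↔
      ((q:ℤ) ∣ ((N:ℤ) - (r:ℕ)) * ((N:ℤ) + (r:ℕ))) := by
    constructor <;> intro h
    · have : ((N:ℤ) - r) * ((N:ℤ) + r)
          = ((N:ℤ) - (a*Q+r : ℕ)) * ((N:ℤ) + (a*Q+r : ℕ))
            + ((a*Q : ℕ) : ℤ) * (((a*Q+r:ℕ) : ℤ) + r) := by push_cast; ring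
      rw [this]; exact dvd_add h (hdvd.mul_right _)
    · have : ((N:ℤ) - (a*Q+r : ℕ)) * ((N:ℤ) + (a*Q+r : ℕ))
          = ((N:ℤ) - r) * ((N:ℤ) + r) - ((a*Q : ℕ) : ℤ) * (((a*Q+r:ℕ) : ℤ) + r) := by
        push_cast; ring
      rw [this]; exact dvd_sub h (hdvd.mul_right _)
  have h2 : (q ∣ a * Q + r) ↔ (q ∣ r) :=
    (Nat.dvd_add_right (Dvd.dvd.mul_left hq a))
  rw [Gfun, Gfun]
  by_cases hd : (q:ℤ) ∣ ((N:ℤ) - (r:ℕ)) * ((N:ℤ) + (r:ℕ))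
  · rw [if_pos (h1.2 hd), if_pos hd]
  · rw [if_neg (fun h => hd (h1.1 h)), if_neg hd]
    by_cases hr : q ∣ r
    · rw [if_pos (h2.2 hr), if_pos hr]
    · rw [if_neg (fun h => hr (h2.1 h)), if_neg hr]

lemma icc_sum_eq (M : ℕ) (g : ℕ → ℝ) :
    ∑ n ∈ Icc 1 M, g n = ∑ i ∈ range M, g (i + 1) := by
  rw [← Finset.Ico_add_one_right_eq_Icc, Finset.sum_Ico_eq_sum_range]
  simp [add_comm]

lemma step (N p Q : ℕ) (f : ℕ → ℝ) (hp : p.Prime) (hQ : Q ≠ 0) (hpQ : ¬ p ∣ Q) :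
    ∑ n ∈ Icc 1 (p * Q), ∏ q ∈ (p * Q).primeFactors, Gfun N f q n
    = Rfun N f p * ∑ r ∈ Icc 1 Q, ∏ q ∈ Q.primeFactors, Gfun N f q r := by
  have hpnot : p ∉ Q.primeFactors := fun h => hpQ (Nat.dvd_of_mem_primeFactors h)
  have hpf : (p * Q).primeFactors = insert p Q.primeFactors := by
    rw [Nat.primeFactors_mul hp.ne_zero hQ, Nat.Prime.primeFactors hp,
      ← Finset.insert_eq]
  rw [icc_sum_eq, icc_sum_eq, sum_range_mul p Q (Nat.pos_of_ne_zero hQ)]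
  have hterm : ∀ a ∈ range p, ∀ b ∈ range Q,
      ∏ q ∈ (p * Q).primeFactors, Gfun N f q (a * Q + b + 1)
      = Gfun N f p (a * Q + (b + 1)) * ∏ q ∈ Q.primeFactors, Gfun N f q (b + 1) := by
    intro a _ b _
    rw [hpf, Finset.prod_insert hpnot, add_assoc]
    congr 1
    apply Finset.prod_congr rfl
    intro q hq
    rw [Gfun_mod N f q a Q (b+1) (Nat.dvd_of_mem_primeFactors hq)]
  calc ∑ a ∈ range p, ∑ b ∈ range Q,
        ∏ q ∈ (p * Q).primeFactors, Gfun N f q (a * Q + b + 1)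
      = ∑ a ∈ range p, ∑ b ∈ range Q,
        Gfun N f p (a * Q + (b + 1)) * ∏ q ∈ Q.primeFactors, Gfun N f q (b + 1) := by
        exact Finset.sum_congr rfl fun a ha =>
          Finset.sum_congr rfl fun b hb => hterm a ha b hb
    _ = ∑ b ∈ range Q, ∑ a ∈ range p,
        Gfun N f p (a * Q + (b + 1)) * ∏ q ∈ Q.primeFactors, Gfun N f q (b + 1) :=
        Finset.sum_comm
    _ = ∑ b ∈ range Q, Rfun N f p * ∏ q ∈ Q.primeFactors, Gfun N f q (b + 1) := by
        refine Finset.sum_congr rfl fun b _ => ?_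
        rw [← Finset.sum_mul, sum_range_p N p Q (b+1) hp f hpQ, sum_zmod N p hp f]
    _ = Rfun N f p * ∑ b ∈ range Q, ∏ q ∈ Q.primeFactors, Gfun N f q (b + 1) := by
        rw [Finset.mul_sum]

lemma keyT (N : ℕ) (f : ℕ → ℝ) : ∀ P : ℕ, Squarefree P →
    ∑ n ∈ Icc 1 P, ∏ q ∈ P.primeFactors, Gfun N f q n
    = ∏ q ∈ P.primeFactors, Rfun N f q := by
  intro P
  induction P using Nat.strong_induction_on with
  | _ P ih =>
    intro hsq
    by_cases hP1 : P = 1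
    · subst hP1; simp
    · have hP0 : P ≠ 0 := hsq.ne_zero
      have hp : P.minFac.Prime := Nat.minFac_prime hP1
      obtain ⟨Q, hPQ⟩ : P.minFac ∣ P := Nat.minFac_dvd P
      set p := P.minFac
      have hQ0 : Q ≠ 0 := by rintro rfl; rw [mul_zero] at hPQ; exact hP0 hPQ
      have hpQ : ¬ p ∣ Q := by
        rintro ⟨R, hR⟩
        exact hp.not_isUnit (hsq p ⟨R, by rw [hPQ, hR]; ring⟩)
      have hQsq : Squarefree Q := hsq.squarefree_of_dvd ⟨p, by rw [hPQ]; ring⟩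
      have hQlt : Q < P := by
        have h2 : 2 * Q ≤ p * Q := Nat.mul_le_mul_right Q hp.two_le
        omega
      rw [hPQ, step N p Q f hp hQ0 hpQ, ih Q hQlt hQsq,
        Nat.primeFactors_mul hp.ne_zero hQ0, Nat.Prime.primeFactors hp,
        ← Finset.insert_eq,
        Finset.prod_insert (fun h => hpQ (Nat.dvd_of_mem_primeFactors h))]

lemma primeFactors_div_gcd (P n : ℕ) (hsq : Squarefree P) :
    (P / Nat.gcd P n).primeFactors = P.primeFactors.filter (fun q => ¬ q ∣ n) := by
  have hP0 : P ≠ 0 := hsq.ne_zero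
  have hg : Nat.gcd P n ∣ P := Nat.gcd_dvd_left P n
  have hg0 : Nat.gcd P n ≠ 0 := fun h => hP0 (Nat.eq_zero_of_gcd_eq_zero_left h)
  have hd0 : P / Nat.gcd P n ≠ 0 := by
    have := Nat.div_pos (Nat.le_of_dvd (Nat.pos_of_ne_zero hP0) hg) (Nat.pos_of_ne_zero hg0)
    omega
  ext q
  simp only [Nat.mem_primeFactors, Finset.mem_filter]
  constructor
  · rintro ⟨hq, hdvd, -⟩
    have hqP : q ∣ P := hdvd.trans (Nat.div_dvd_of_dvd hg)
    refine ⟨⟨hq, hqP, hP0⟩, ?_⟩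
    intro hqn
    obtain ⟨u, hu⟩ := hdvd
    obtain ⟨v, hv⟩ := Nat.dvd_gcd hqP hqn
    have hsqdvd : q * q ∣ P :=
      ⟨v * u, by rw [← Nat.div_mul_cancel hg, hu, hv]; ring⟩
    exact hq.not_isUnit (hsq q hsqdvd)
  · rintro ⟨⟨hq, hqP, -⟩, hqn⟩
    refine ⟨hq, ?_, hd0⟩
    have hqg : ¬ q ∣ Nat.gcd P n := fun h => hqn (h.trans (Nat.gcd_dvd_right P n))
    have hmul : q ∣ Nat.gcd P n * (P / Nat.gcd P n) := by
      rw [Nat.mul_div_cancel' hg]; exact hqP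
    exact ((Nat.Prime.dvd_mul hq).1 hmul).resolve_left hqg

lemma indicator_eq (N P n : ℕ) (hsq : Squarefree P) (f : ℕ → ℝ) :
    (if Int.gcd (((N:ℤ) - n) * ((N:ℤ) + n)) (P:ℤ) = 1
      then ∏ q ∈ (P / Nat.gcd P n).primeFactors, (f q - 1) / ((q:ℝ) - 1) else 0)
    = ∏ q ∈ P.primeFactors, Gfun N f q n := by
  set X : ℤ := ((N:ℤ) - n) * ((N:ℤ) + n) with hX
  by_cases h : Int.gcd X (P:ℤ) = 1
  · rw [if_pos h, primeFactors_div_gcd P n hsq, Finset.prod_filter]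
    apply Finset.prod_congr rfl
    intro q hq
    have hqP := Nat.dvd_of_mem_primeFactors hq
    have hqprime := Nat.prime_of_mem_primeFactors hq
    have hqX : ¬ (q:ℤ) ∣ X := by
      intro hd
      have h1 : (q:ℤ) ∣ ((Int.gcd X (P:ℤ) : ℕ) : ℤ) :=
        Int.dvd_coe_gcd hd (Int.natCast_dvd_natCast.2 hqP)
      rw [h] at h1
      have : q ∣ 1 := by exact_mod_cast h1
      exact hqprime.ne_one (Nat.dvd_one.1 this)
    rw [Gfun, if_neg hqX]
    by_cases hn : q ∣ n
    · rw [if_neg (not_not_intro hn), if_pos hn]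
    · rw [if_pos hn, if_neg hn]
  · rw [if_neg h]
    have hg0 : Int.gcd X (P:ℤ) ≠ 0 := by
      intro h0
      have hP := (Int.gcd_eq_zero_iff.1 h0).2
      exact hsq.ne_zero (by exact_mod_cast hP)
    obtain ⟨q, hq, hqg⟩ := Nat.exists_prime_and_dvd h
    have hqP : q ∣ P := by
      have : (q:ℤ) ∣ (P:ℤ) :=
        dvd_trans (Int.natCast_dvd_natCast.2 hqg) (Int.gcd_dvd_right _ _)
      exact_mod_cast this
    have hqX : (q:ℤ) ∣ X :=
      dvd_trans (Int.natCast_dvd_natCast.2 hqg) (Int.gcd_dvd_left _ _)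
    refine (Finset.prod_eq_zero (Nat.mem_primeFactors.2 ⟨hq, hqP, hsq.ne_zero⟩) ?_).symm
    rw [Gfun, if_pos hqX]

lemma rhs_eq (N P : ℕ) (hN : N ≠ 0) (hP : P ≠ 0) (f : ℕ → ℝ) :
    (∏ p ∈ (Nat.gcd N P).primeFactors, (f p - 1)) *
      ∏ p ∈ P.primeFactors.filter (fun p => ¬ p ∣ 6 * N),
        (f p - 2 * (f p - 1) / ((p : ℝ) - 1))
    = ∏ q ∈ P.primeFactors, Rfun N f q := by
  have h1 : (Nat.gcd N P).primeFactors = P.primeFactors.filter (fun q => q ∣ N) := by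
    rw [Nat.primeFactors_gcd hN hP]
    ext q
    simp only [Finset.mem_inter, Finset.mem_filter, Nat.mem_primeFactors]
    tauto
  rw [h1, Finset.prod_filter, Finset.prod_filter, ← Finset.prod_mul_distrib]
  apply Finset.prod_congr rfl
  intro q _
  rw [Rfun]
  by_cases h : q ∣ N
  · rw [if_pos h, if_pos h, if_neg (not_not_intro (h.mul_left 6)), mul_one]
  · rw [if_neg h, if_neg h, one_mul]
    by_cases h6 : q ∣ 6 * N
    · rw [if_neg (not_not_intro h6), if_pos h6]
    · rw [if_pos h6, if_neg h6]

theorem stmt_7 (N P : ℕ) (hN : 1 ≤ N) (hP : 1 ≤ P) (hsq : Squarefree P) (f : ℕ → ℝ) :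
    ∑ n ∈ (Finset.Icc 1 P).filter
        (fun n : ℕ => Int.gcd (((N : ℤ) - (n : ℤ)) * ((N : ℤ) + (n : ℤ))) (P : ℤ) = 1),
      ∏ p ∈ (P / Nat.gcd P n).primeFactors, (f p - 1) / ((p : ℝ) - 1)
    = (∏ p ∈ (Nat.gcd N P).primeFactors, (f p - 1)) *
      ∏ p ∈ P.primeFactors.filter (fun p => ¬ p ∣ 6 * N),
        (f p - 2 * (f p - 1) / ((p : ℝ) - 1)) := by
  rw [Finset.sum_filter, rhs_eq N P (by omega) (by omega) f,
    ← keyT N f P hsq]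
  exact Finset.sum_congr rfl fun n _ => indicator_eq N P n hsq f
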